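/- Let D = (V, A, ψ) be a multidigraph, let s, t ∈ V, and let k ∈ ℕ. Let P and Q be two nonempty subsets of V with V = P ⊔ Q, and let C be a subset of A(P,Q). Then the map E ↦ E ∪ C is a bijection from X_{k−|C|}^{P,Q} to {B ∈ U_k : S(B) = P and B ∩ A(P,Q) = C}, with inverse B ↦ B \ C; in particular these two sets have the same cardinality. -/

import Mathlib

/-!
A multidigraph is given by two finite types `V` (vertices) and `A` (arcs)
together with a map `ψ : A → V × V` sending each arc to its (source, target) pair.
For a subset `B ⊆ A`, the induced subdigraph `D⟨B⟩` has vertex set `V` and arc set `B`.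
-/

/-- There is an arc of `B` from `v` to `w` in the subdigraph `D⟨B⟩`. -/
def ArcStep {V A : Type*} (ψ : A → V × V) (B : Set A) (v w : V) : Prop :=
  ∃ a ∈ B, ψ a = (v, w)

/-- `v` can `B`-reach `w`: the subdigraph `D⟨B⟩` has a walk from `v` to `w`. -/
def CanReach {V A : Type*} (ψ : A → V × V) (B : Set A) (v w : V) : Prop :=
  Relation.ReflTransGen (ArcStep ψ B) v w

/-- `B ⊆ A` is acyclic: the subdigraph `D⟨B⟩` has no directed cycles
(equivalently, no closed walk of positive length). -/
def IsAcyclic {V A : Type*} (ψ : A → V × V) (B : Set A) : Prop :=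
  ∀ v : V, ¬ Relation.TransGen (ArcStep ψ B) v v

/-- `B` is an `s`-convergence: `B` is acyclic and `s` is a to-root of `D⟨B⟩`,
i.e. every vertex can `B`-reach `s`. -/
def IsConvergence {V A : Type*} (ψ : A → V × V) (B : Set A) (s : V) : Prop :=
  IsAcyclic ψ B ∧ ∀ v : V, CanReach ψ B v s

/-- `γ_k(s)`: the number of `s`-convergences of size `k`. -/
noncomputable def gammaCount {V A : Type*} (ψ : A → V × V) (k : ℕ) (s : V) : ℕ :=
  {B : Set A | IsConvergence ψ B s ∧ B.ncard = k}.ncard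

/-- The attraction basin of `s` with respect to `B`: all vertices that can `B`-reach `s`. -/
def basin {V A : Type*} (ψ : A → V × V) (B : Set A) (s : V) : Set V :=
  {v : V | CanReach ψ B v s}

/-- `A(P,Q)`: the set of arcs with source in `P` and target in `Q`. -/
def arcsFromTo {V A : Type*} (ψ : A → V × V) (P Q : Set V) : Set A :=
  {a : A | (ψ a).1 ∈ P ∧ (ψ a).2 ∈ Q}

/-- The outdegree of a vertex: the number of arcs with source `v`. -/
noncomputable def outDeg {V A : Type*} (ψ : A → V × V) (v : V) : ℕ :=
  {a : A | (ψ a).1 = v}.ncard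

/-- The indegree of a vertex: the number of arcs with target `v`. -/
noncomputable def inDeg {V A : Type*} (ψ : A → V × V) (v : V) : ℕ :=
  {a : A | (ψ a).2 = v}.ncard

/-- The digraph is balanced: each vertex has outdegree equal to indegree. -/
def IsBalanced {V A : Type*} (ψ : A → V × V) : Prop :=
  ∀ v : V, outDeg ψ v = inDeg ψ v

/-- `U_k`: the set of all acyclic `k`-element subsets `B` of `A` such that each
vertex can `B`-reach `s` or can `B`-reach `t`. -/
def Uset {V A : Type*} (ψ : A → V × V) (s t : V) (k : ℕ) : Set (Set A) :=
  {B : Set A | IsAcyclic ψ B ∧ B.ncard = k ∧ basin ψ B s ∪ basin ψ B t = Set.univ}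

/-- `X_i^{P,Q}`: the set of all acyclic `i`-element subsets `B` of `A` with
`S(B) = P` and `T(B) = Q` (empty for negative `i`). -/
def Xset {V A : Type*} (ψ : A → V × V) (s t : V) (P Q : Set V) (i : ℤ) : Set (Set A) :=
  {B : Set A | IsAcyclic ψ B ∧ (B.ncard : ℤ) = i ∧ basin ψ B s = P ∧ basin ψ B t = Q}

/-- `|X_i^{P,Q}|`. -/
noncomputable def Xcount {V A : Type*} (ψ : A → V × V) (s t : V) (P Q : Set V) (i : ℤ) : ℕ :=
  (Xset ψ s t P Q i).ncard

section helpers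
variable {V A : Type*} {ψ : A → V × V} {B C : Set A} {P Q : Set V} {s v w : V}

lemma canReach_mono (h : B ⊆ C) (hr : CanReach ψ B v w) : CanReach ψ C v w :=
  Relation.ReflTransGen.mono (fun _ _ ⟨a, ha, he⟩ => ⟨a, h ha, he⟩) _ _ hr

lemma acyclic_mono (h : B ⊆ C) (hc : IsAcyclic ψ C) : IsAcyclic ψ B :=
  fun v hv => hc v (Relation.TransGen.mono (fun _ _ ⟨a, ha, he⟩ => ⟨a, h ha, he⟩) _ _ hv)

lemma reach_closed (hW : ∀ a ∈ B, (ψ a).1 ∈ Q → (ψ a).2 ∈ Q)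
    (hv : v ∈ Q) (h : CanReach ψ B v w) : w ∈ Q := by
  induction h with
  | refl => exact hv
  | tail _ step ih =>
    obtain ⟨a, ha, he⟩ := step
    have := hW a ha
    rw [he] at this
    exact this ih

lemma reach_avoid (hQc : ∀ a ∈ B, (ψ a).1 ∈ Q → (ψ a).2 ∈ Q)
    (hC2 : ∀ a ∈ C, (ψ a).2 ∈ Q)
    (h : CanReach ψ B v w) (hw : w ∉ Q) : CanReach ψ (B \ C) v w := by
  induction h with
  | refl => exact .refl
  | tail _ step ih =>
    rename_i b c hvb
    obtain ⟨a, ha, he⟩ := step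
    have hnC : a ∉ C := fun hc => hw (by have := hC2 a hc; rwa [he] at this)
    have hb : b ∉ Q := fun hb => hw (by have := hQc a ha; rw [he] at this; exact this hb)
    exact .tail (ih hb) ⟨a, ⟨ha, hnC⟩, he⟩

lemma reach_inside (hQc : ∀ a ∈ B, (ψ a).1 ∈ Q → (ψ a).2 ∈ Q)
    (hC1 : ∀ a ∈ C, (ψ a).1 ∉ Q) :
    ∀ {v}, CanReach ψ B v w → v ∈ Q → CanReach ψ (B \ C) v w := by
  intro v h
  induction h using Relation.ReflTransGen.head_induction_on with
  | refl => exact fun _ => .refl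
  | head step rest ih =>
    intro hv
    rename_i u c
    obtain ⟨a, ha, he⟩ := step
    have hc : c ∈ Q := by have := hQc a ha; rw [he] at this; exact this hv
    have hnC : a ∉ C := fun hcc => hC1 a hcc (by rw [he]; exact hv)
    exact .head ⟨a, ⟨ha, hnC⟩, he⟩ (ih hc)

lemma trans_avoid (hQc : ∀ a ∈ B, (ψ a).1 ∈ Q → (ψ a).2 ∈ Q)
    (hC2 : ∀ a ∈ C, (ψ a).2 ∈ Q)
    (h : Relation.TransGen (ArcStep ψ B) v w) (hw : w ∉ Q) :
    Relation.TransGen (ArcStep ψ (B \ C)) v w := by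
  induction h with
  | single step =>
    obtain ⟨a, ha, he⟩ := step
    have hnC : a ∉ C := fun hc => hw (by have := hC2 a hc; rwa [he] at this)
    exact .single ⟨a, ⟨ha, hnC⟩, he⟩
  | tail _ step ih =>
    rename_i b c hvb
    obtain ⟨a, ha, he⟩ := step
    have hnC : a ∉ C := fun hc => hw (by have := hC2 a hc; rwa [he] at this)
    have hb : b ∉ Q := fun hb => hw (by have := hQc a ha; rw [he] at this; exact this hb)
    exact .tail (ih hb) ⟨a, ⟨ha, hnC⟩, he⟩

lemma trans_inside (hQc : ∀ a ∈ B, (ψ a).1 ∈ Q → (ψ a).2 ∈ Q)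
    (hC1 : ∀ a ∈ C, (ψ a).1 ∉ Q) :
    ∀ {v}, Relation.TransGen (ArcStep ψ B) v w → v ∈ Q →
      Relation.TransGen (ArcStep ψ (B \ C)) v w := by
  intro v h
  induction h using Relation.TransGen.head_induction_on with
  | single step =>
    intro hv
    obtain ⟨a, ha, he⟩ := step
    exact .single ⟨a, ⟨ha, fun hcc => hC1 a hcc (by rw [he]; exact hv)⟩, he⟩
  | head step rest ih =>
    intro hv
    rename_i u c
    obtain ⟨a, ha, he⟩ := step
    have hc : c ∈ Q := by have := hQc a ha; rw [he] at this; exact this hv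
    have hnC : a ∉ C := fun hcc => hC1 a hcc (by rw [he]; exact hv)
    exact .head ⟨a, ⟨ha, hnC⟩, he⟩ (ih hc)

lemma closed_compl (hbs : basin ψ B s = P) (hd : ∀ x ∈ P, x ∉ Q)
    (hu : ∀ x, x ∈ Q ∨ x ∈ P) :
    ∀ a ∈ B, (ψ a).1 ∈ Q → (ψ a).2 ∈ Q := by
  intro a ha h1
  rcases hu (ψ a).2 with h | h
  · exact h
  · have h2 : (ψ a).2 ∈ basin ψ B s := by rw [hbs]; exact h
    have h3 : (ψ a).1 ∈ basin ψ B s := .head ⟨a, ha, rfl⟩ h2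
    rw [hbs] at h3
    exact absurd h1 (hd _ h3)

end helpers

/-- The map `E ↦ E ∪ C` is a bijection from `X_{k−|C|}^{P,Q}` onto
`{B ∈ U_k : S(B) = P and B ∩ A(P,Q) = C}`, with inverse `B ↦ B \ C`; in particular
these two sets have the same cardinality. -/
theorem union_bijOn_and_card_eq {V A : Type*} [Fintype V] [Fintype A]
    (ψ : A → V × V) (s t : V) (k : ℕ)
    (P Q : Set V) (hP : P.Nonempty) (hQ : Q.Nonempty)
    (hunion : P ∪ Q = Set.univ) (hdisj : P ∩ Q = ∅)
    (C : Set A) (hC : C ⊆ arcsFromTo ψ P Q) :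
    Set.BijOn (fun E : Set A => E ∪ C)
      (Xset ψ s t P Q ((k : ℤ) - C.ncard))
      {B ∈ Uset ψ s t k | basin ψ B s = P ∧ B ∩ arcsFromTo ψ P Q = C} ∧
    Set.InvOn (fun B : Set A => B \ C) (fun E : Set A => E ∪ C)
      (Xset ψ s t P Q ((k : ℤ) - C.ncard))
      {B ∈ Uset ψ s t k | basin ψ B s = P ∧ B ∩ arcsFromTo ψ P Q = C} ∧
    (Xset ψ s t P Q ((k : ℤ) - C.ncard)).ncard =
      {B ∈ Uset ψ s t k | basin ψ B s = P ∧ B ∩ arcsFromTo ψ P Q = C}.ncard := by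
  have hd : ∀ x ∈ P, x ∉ Q := fun x hx hx' =>
    (Set.eq_empty_iff_forall_notMem.mp hdisj x) ⟨hx, hx'⟩
  have hdQ : ∀ x ∈ Q, x ∉ P := fun x hx hx' => hd x hx' hx
  have hu : ∀ x : V, x ∈ P ∨ x ∈ Q := fun x => by
    have h : x ∈ P ∪ Q := by rw [hunion]; trivial
    exact h
  have huQ : ∀ x : V, x ∈ Q ∨ x ∈ P := fun x => (hu x).symm
  have hC1 : ∀ a ∈ C, (ψ a).1 ∉ Q := fun a ha => hd _ (hC ha).1
  have hC2 : ∀ a ∈ C, (ψ a).2 ∈ Q := fun a ha => (hC ha).2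
  have hmapsF : ∀ E ∈ Xset ψ s t P Q ((k : ℤ) - C.ncard),
      (E ∪ C) ∈ {B ∈ Uset ψ s t k | basin ψ B s = P ∧ B ∩ arcsFromTo ψ P Q = C} ∧
        E ∩ C ⊆ ∅ := by
    intro E hE
    obtain ⟨hEac, hEcard, hEs, hEt⟩ := hE
    have hsP : s ∈ P := by rw [← hEs]; exact Relation.ReflTransGen.refl
    have hsQ : s ∉ Q := hd s hsP
    have hEQc := closed_compl hEs hd huQ
    have hEPc := closed_compl hEt hdQ hu
    have hdisjEC : E ∩ C ⊆ ∅ := by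
      rintro a ⟨haE, haC⟩
      exact hd _ (hEPc a haE (hC haC).1) (hC haC).2
    have hBQc : ∀ a ∈ E ∪ C, (ψ a).1 ∈ Q → (ψ a).2 ∈ Q := by
      rintro a (ha | ha) h1
      · exact hEQc a ha h1
      · exact hC2 a ha
    have hEeq : (E ∪ C) \ C = E := Set.union_diff_cancel_right hdisjEC
    have hBac : IsAcyclic ψ (E ∪ C) := by
      intro v hv
      rcases hu v with hvP | hvQ
      · have h2 := trans_avoid hBQc hC2 hv (hd v hvP)
        rw [hEeq] at h2
        exact hEac v h2
      · have h2 := trans_inside hBQc hC1 hv hvQ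
        rw [hEeq] at h2
        exact hEac v h2
    have hBs : basin ψ (E ∪ C) s = P := by
      apply Set.Subset.antisymm
      · intro v hv
        have h2 := reach_avoid hBQc hC2 hv hsQ
        rw [hEeq] at h2
        rw [← hEs]; exact h2
      · rw [← hEs]
        exact fun v hv => canReach_mono Set.subset_union_left hv
    have hcard : (E ∪ C).ncard = k := by
      have h1 := Set.ncard_union_eq (Set.disjoint_iff.mpr hdisjEC)
        (Set.toFinite E) (Set.toFinite C)
      have h2 : ((E ∪ C).ncard : ℤ) = (k : ℤ) := by rw [h1]; push_cast; omega
      exact_mod_cast h2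
    refine ⟨⟨⟨hBac, hcard, ?_⟩, hBs, ?_⟩, hdisjEC⟩
    · apply Set.eq_univ_of_forall
      intro v
      rcases hu v with hvP | hvQ
      · left; rw [hBs]; exact hvP
      · right
        have : v ∈ basin ψ E t := by rw [hEt]; exact hvQ
        exact canReach_mono Set.subset_union_left this
    · apply Set.Subset.antisymm
      · rintro a ⟨haB, haAC⟩
        rcases haB with haE | haC
        · exact absurd haAC.2 (hd _ (hEPc a haE haAC.1))
        · exact haC
      · exact fun a ha => ⟨Or.inr ha, hC ha⟩
  have hmapsB : ∀ B ∈ {B ∈ Uset ψ s t k | basin ψ B s = P ∧ B ∩ arcsFromTo ψ P Q = C},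
      (B \ C) ∈ Xset ψ s t P Q ((k : ℤ) - C.ncard) ∧ C ⊆ B := by
    intro B hB
    obtain ⟨⟨hBac, hBk, hBuniv⟩, hBs, hBC⟩ := hB
    have hCB : C ⊆ B := fun a ha => (show a ∈ B ∩ arcsFromTo ψ P Q by rw [hBC]; exact ha).1
    have hsP : s ∈ P := by rw [← hBs]; exact Relation.ReflTransGen.refl
    have hsQ : s ∉ Q := hd s hsP
    have hBQc := closed_compl hBs hd huQ
    obtain ⟨q, hq⟩ := hQ
    have hbt : ∀ x ∈ Q, x ∈ basin ψ B t := by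
      intro x hx
      have hx2 : x ∈ basin ψ B s ∪ basin ψ B t := by rw [hBuniv]; exact Set.mem_univ x
      rcases hx2 with h | h
      · exact absurd (by rw [← hBs]; exact h : x ∈ P) (hdQ x hx)
      · exact h
    have htQ : t ∈ Q := reach_closed hBQc hq (hbt q hq)
    have hEPc : ∀ a ∈ B \ C, (ψ a).1 ∈ P → (ψ a).2 ∈ P := by
      rintro a ⟨haB, haC⟩ h1
      rcases hu (ψ a).2 with h | h
      · exact h
      · exact absurd (show a ∈ C by rw [← hBC]; exact ⟨haB, h1, h⟩) haC
    have hEs : basin ψ (B \ C) s = P := by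
      apply Set.Subset.antisymm
      · rw [← hBs]
        exact fun v hv => canReach_mono Set.diff_subset hv
      · intro v hv
        exact reach_avoid hBQc hC2 (show v ∈ basin ψ B s by rw [hBs]; exact hv) hsQ
    have hEt : basin ψ (B \ C) t = Q := by
      apply Set.Subset.antisymm
      · intro v hv
        rcases hu v with h | h
        · exact absurd (reach_closed hEPc h hv) (hdQ t htQ)
        · exact h
      · intro v hv
        exact reach_inside hBQc hC1 (hbt v hv) hv
    have hCk : C.ncard ≤ k := by
      rw [← hBk]; exact Set.ncard_le_ncard hCB (Set.toFinite B)
    have hcard : ((B \ C).ncard : ℤ) = (k : ℤ) - C.ncard := by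
      rw [Set.ncard_diff hCB (Set.toFinite C), hBk, Nat.cast_sub hCk]
    exact ⟨⟨acyclic_mono Set.diff_subset hBac, hcard, hEs, hEt⟩, hCB⟩
  have hinv : Set.InvOn (fun B : Set A => B \ C) (fun E : Set A => E ∪ C)
      (Xset ψ s t P Q ((k : ℤ) - C.ncard))
      {B ∈ Uset ψ s t k | basin ψ B s = P ∧ B ∩ arcsFromTo ψ P Q = C} :=
    ⟨fun E hE => Set.union_diff_cancel_right (hmapsF E hE).2,
     fun B hB => Set.diff_union_of_subset (hmapsB B hB).2⟩
  have hbij := hinv.bijOn (fun E hE => (hmapsF E hE).1) (fun B hB => (hmapsB B hB).1)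
  exact ⟨hbij, hinv, by rw [← hbij.image_eq, Set.ncard_image_of_injOn hbij.injOn]⟩
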